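/- Let f(x) = (x²+ax)² + b(x²+ax) + c with a, b, c ∈ ℤ be irreducible over ℚ. Write x² + bx + c = (x-β_1)(x-β_2) and x² + ax - β_i = (x-α_{i,1})(x-α_{i,2}) for i = 1, 2. Then the space of linear relations {(l_1,l_2,l_3,l_4,l_5) ∈ ℚ⁵ : l_1 α_{1,1} + l_2 α_{1,2} + l_3 α_{2,1} + l_4 α_{2,2} = l_5} is 2-dimensional, spanned by the relations α_{1,1} + α_{1,2} = -a and α_{2,1} + α_{2,2} = -a. -/

import Mathlib

open Polynomial in
theorem stmt_6 (a b c : ℤ)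
    (hf : Irreducible (((X ^ 2 + C (a : ℚ) * X) ^ 2 + C (b : ℚ) * (X ^ 2 + C (a : ℚ) * X)
      + C (c : ℚ)) : Polynomial ℚ))
    (β : Fin 2 → ℂ) (α : Fin 2 → Fin 2 → ℂ)
    (hβ : (X ^ 2 + C (b : ℂ) * X + C (c : ℂ) : Polynomial ℂ)
      = (X - C (β 0)) * (X - C (β 1)))
    (hα : ∀ i, (X ^ 2 + C (a : ℂ) * X - C (β i) : Polynomial ℂ)
      = (X - C (α i 0)) * (X - C (α i 1))) :
    LinearIndependent ℚ ![![1, 1, 0, 0, -(a : ℚ)], ![0, 0, 1, 1, -(a : ℚ)]] ∧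
    ∀ l : Fin 5 → ℚ,
      ((l 0 : ℂ) * α 0 0 + (l 1 : ℂ) * α 0 1 + (l 2 : ℂ) * α 1 0 + (l 3 : ℂ) * α 1 1
        = (l 4 : ℂ))
      ↔ ∃ q r : ℚ, l = q • ![1, 1, 0, 0, -(a : ℚ)] + r • ![0, 0, 1, 1, -(a : ℚ)] := by
  have hβ0 := congrArg (eval 0) hβ
  have hβ1 := congrArg (eval 1) hβ
  simp only [eval_add, eval_mul, eval_sub, eval_pow, eval_X, eval_C] at hβ0 hβ1
  -- sum of the β's
  have hbsum : β 0 + β 1 = -(b : ℂ) := by linear_combination hβ1 - hβ0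
  have hα00 := fun i => congrArg (eval 0) (hα i)
  have hα01 := fun i => congrArg (eval 1) (hα i)
  simp only [eval_add, eval_mul, eval_sub, eval_pow, eval_X, eval_C] at hα00 hα01
  have hsum : ∀ i, α i 0 + α i 1 = -(a : ℂ) := by
    intro i
    linear_combination (hα01 i) - (hα00 i)
  have hβval : β 0 ^ 2 + (b : ℂ) * β 0 + (c : ℂ) = 0 := by
    have := congrArg (eval (β 0)) hβ
    simp only [eval_add, eval_mul, eval_sub, eval_pow, eval_X, eval_C] at this
    linear_combination this
  have hroot : ∀ i, α i 0 ^ 2 + (a : ℂ) * α i 0 - β i = 0 := by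
    intro i
    have := congrArg (eval (α i 0)) (hα i)
    simp only [eval_add, eval_mul, eval_sub, eval_pow, eval_X, eval_C] at this
    linear_combination this
  set A := α 0 0 with hA
  set B := α 1 0 with hB
  set F : ℚ[X] := (X ^ 2 + C (a : ℚ) * X) ^ 2 + C (b : ℚ) * (X ^ 2 + C (a : ℚ) * X)
      + C (c : ℚ) with hF
  have hmonic : F.Monic := by rw [hF]; monicity!
  have hdegF : F.degree = 4 := by rw [hF]; compute_degree!
  have haev : (aeval A) F = 0 := by
    rw [hF]
    simp only [map_add, map_mul, map_pow, aeval_X, aeval_C]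
    have h1 := hroot 0
    push_cast
    simp only [Algebra.algebraMap_self, Rat.cast_intCast, eq_ratCast, Rat.cast_intCast]
    linear_combination hβval + (A ^ 2 + (a : ℂ) * A + β 0 + (b : ℂ)) * h1
  have hmin : minpoly ℚ A = F := (minpoly.eq_of_irreducible_of_monic hf haev hmonic).symm
  have hint : IsIntegral ℚ A := ⟨F, hmonic, haev⟩
  -- key lemma
  have key : ∀ q r s : ℚ, (q : ℂ) * A + (r : ℂ) * B = (s : ℂ) → q = 0 ∧ r = 0 ∧ s = 0 := by
    intro q r s hqrs
    by_cases hr : r = 0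
    · subst hr
      by_cases hq : q = 0
      · subst hq
        refine ⟨rfl, rfl, ?_⟩
        have : (s : ℂ) = 0 := by rw [← hqrs]; push_cast; ring
        exact_mod_cast this
      · exfalso
        set p : ℚ[X] := C q * X - C s with hp
        have hpne : p ≠ 0 := by
          intro h0
          rw [hp] at h0
          have := congrArg (fun p => coeff p 1) h0
          simp only [coeff_sub, coeff_C_mul, coeff_C, coeff_zero, coeff_X] at this
          norm_num at this
          exact hq this
        have hpd : p.degree ≤ 1 := by rw [hp]; compute_degree
        have hpev : (aeval A) p = 0 := by
          rw [hp]
          simp only [map_sub, map_mul, aeval_X, aeval_C]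
          simp only [Algebra.algebraMap_self, eq_ratCast]
          linear_combination hqrs
        have := minpoly.degree_le_of_ne_zero ℚ A hpne hpev
        rw [hmin, hdegF] at this
        exact absurd (this.trans hpd) (by decide)
    · exfalso
      set u : ℚ := -q / r with hu
      set t : ℚ := s / r with ht
      have hrc : (r : ℂ) ≠ 0 := by exact_mod_cast hr
      have hBeq : B = (t : ℂ) + (u : ℂ) * A := by
        rw [hu, ht]
        push_cast
        field_simp
        linear_combination hqrs
      set p : ℚ[X] := C (1 + u ^ 2) * X ^ 2 + C (a + 2 * t * u + a * u) * X
          + C (t ^ 2 + a * t + b) with hp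
      have hpne : p ≠ 0 := by
        intro h0
        rw [hp] at h0
        have := congrArg (fun p => coeff p 2) h0
        simp only [coeff_add, coeff_C_mul, coeff_X_pow, coeff_C, coeff_zero, coeff_X] at this
        norm_num at this
        nlinarith [sq_nonneg u]
      have hpd : p.degree ≤ 2 := by rw [hp]; compute_degree
      have hpev : (aeval A) p = 0 := by
        rw [hp]
        simp only [map_add, map_mul, map_pow, aeval_X, aeval_C]
        simp only [Algebra.algebraMap_self, eq_ratCast]
        push_cast
        linear_combination (hroot 0) + (hroot 1) + hbsum
          - (B + (t : ℂ) + (u : ℂ) * A + (a : ℂ)) * hBeq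
      have := minpoly.degree_le_of_ne_zero ℚ A hpne hpev
      rw [hmin, hdegF] at this
      exact absurd (this.trans hpd) (by decide)
  constructor
  · rw [LinearIndependent.pair_iff]
    intro s t h
    constructor
    · simpa using congrFun h 0
    · simpa using congrFun h 2
  · intro l
    constructor
    · intro hl
      have hkey : ((l 0 - l 1 : ℚ) : ℂ) * A + ((l 2 - l 3 : ℚ) : ℂ) * B
          = ((l 4 + (l 1 + l 3) * a : ℚ) : ℂ) := by
        push_cast
        linear_combination hl - (l 1 : ℂ) * hsum 0 - (l 3 : ℂ) * hsum 1
      obtain ⟨h1, h2, h3⟩ := key _ _ _ hkey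
      refine ⟨l 0, l 2, ?_⟩
      have e1 : l 1 = l 0 := by linarith [sub_eq_zero.mp h1]
      have e2 : l 3 = l 2 := by linarith [sub_eq_zero.mp h2]
      have e3 : l 4 = -(l 0 + l 2) * a := by
        rw [e1, e2] at h3; linarith [h3]
      funext i
      fin_cases i <;>
        simp [Matrix.cons_val_zero, Matrix.cons_val_one, e1, e2, e3] <;> ring
    · rintro ⟨q, r, rfl⟩
      simp only [Pi.add_apply, Pi.smul_apply, Matrix.cons_val_zero, Matrix.cons_val_one,
        Matrix.head_cons, Matrix.cons_val_two, Matrix.cons_val_three, Matrix.cons_val_four,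
        Matrix.tail_cons, smul_eq_mul]
      push_cast
      linear_combination (q : ℂ) * hsum 0 + (r : ℂ) * hsum 1
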